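/- Let d ≥ 2 and k ∈ {1,…,d−1}. Let (r₁,r₂,r₃) be a strictly admissible triple of positive reals. Then for every y₃ ∈ ℝ^{d−k} with |y₃| < r₃, the set S(y₃) of all pairs (y₁,y₂) ∈ ℝ^{d−k} × ℝ^{d−k} such that |y_j| < r_j for j = 1,2, y₁ + y₂ + y₃ = 0, and the triple ((r₁²−|y₁|²)^{1/2}, (r₂²−|y₂|²)^{1/2}, (r₃²−|y₃|²)^{1/2}) is strictly admissible, is nonempty, and the set {y₁ ∈ ℝ^{d−k} : (y₁, −y₁−y₃) ∈ S(y₃)} has positive (d−k)-dimensional Lebesgue measure; moreover this measure is a lower semicontinuous function of (y₃, r₁, r₂, r₃). -/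

import Mathlib

open MeasureTheory Metric Filter
open scoped ENNReal Pointwise Topology

noncomputable section

abbrev Euc (d : ℕ) : Type := EuclideanSpace ℝ (Fin d)

/-- The Riesz–Sobolev trilinear form
`𝒯(E₁,E₂,E₃) = ∫∫ 1_{E₁}(x) 1_{E₂}(y) 1_{E₃}(-x-y) dx dy`. -/
noncomputable def Ttri {d : ℕ} (E₁ E₂ E₃ : Set (Euc d)) : ℝ :=
  ∫ x : Euc d, ∫ y : Euc d,
    E₁.indicator (fun _ => (1:ℝ)) x * E₂.indicator (fun _ => (1:ℝ)) y *
      E₃.indicator (fun _ => (1:ℝ)) (-x - y)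

/-- `E^•` : the closed ball centered at `0` with the same volume as `E`. -/
noncomputable def ballSym {d : ℕ} (E : Set (Euc d)) : Set (Euc d) :=
  Metric.closedBall 0
    (((volume E).toReal / (volume (Metric.closedBall (0 : Euc d) 1)).toReal) ^ (1 / (d:ℝ)))

/-- `τ`-admissibility of an ordered triple of positive reals. -/
def TauAdm (τ r₁ r₂ r₃ : ℝ) : Prop :=
  0 < r₁ ∧ 0 < r₂ ∧ 0 < r₃ ∧
  r₁ + r₂ ≥ r₃ + τ * max r₁ (max r₂ r₃) ∧
  r₂ + r₃ ≥ r₁ + τ * max r₁ (max r₂ r₃) ∧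
  r₁ + r₃ ≥ r₂ + τ * max r₁ (max r₂ r₃)

/-- `τ`-admissibility of an ordered triple of sets. -/
def TauAdmSets (d : ℕ) (τ : ℝ) (E₁ E₂ E₃ : Set (Euc d)) : Prop :=
  TauAdm τ ((volume E₁).toReal ^ (1/(d:ℝ))) ((volume E₂).toReal ^ (1/(d:ℝ)))
    ((volume E₃).toReal ^ (1/(d:ℝ)))

/-- Strict admissibility of a triple of positive reals. -/
def StrictAdm (r₁ r₂ r₃ : ℝ) : Prop :=
  0 < r₁ ∧ 0 < r₂ ∧ 0 < r₃ ∧ r₁ < r₂ + r₃ ∧ r₂ < r₁ + r₃ ∧ r₃ < r₁ + r₂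

/-- An ellipsoid: image of the closed unit ball under an invertible affine map. -/
def IsEllipsoid (d : ℕ) (S : Set (Euc d)) : Prop :=
  ∃ (A : Euc d ≃ₗ[ℝ] Euc d) (v : Euc d),
    S = (fun x => A x + v) '' Metric.closedBall 0 1

/-- An ellipsoid centered at `0`. -/
def IsCenteredEllipsoid (d : ℕ) (S : Set (Euc d)) : Prop :=
  ∃ A : Euc d ≃ₗ[ℝ] Euc d, S = (fun x => A x) '' Metric.closedBall 0 1

/-- Assemble a point of `ℝ^d` from its first `d-1` coordinates and its last one. -/
def join (d : ℕ) (x' : Euc (d-1)) (t : ℝ) : Euc d :=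
  WithLp.toLp 2 (fun (i : Fin d) => if h : (i:ℕ) < d - 1 then x' ⟨i, h⟩ else t)

/-- The first `d-1` coordinates. -/
def projHead (d : ℕ) (x : Euc d) : Euc (d-1) :=
  WithLp.toLp 2 (fun (i : Fin (d-1)) => x ⟨i, lt_of_lt_of_le i.2 (Nat.sub_le d 1)⟩)

/-- The last coordinate. -/
def lastC (d : ℕ) (x : Euc d) : ℝ :=
  if h : 0 < d then x ⟨d-1, Nat.sub_lt h one_pos⟩ else 0

/-- Vertical slice `E^{x'} = {t : (x',t) ∈ E}`. -/
def sliceV (d : ℕ) (E : Set (Euc d)) (x' : Euc (d-1)) : Set ℝ :=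
  {t : ℝ | join d x' t ∈ E}

/-- Horizontal slice `E_t = {y' : (y',t) ∈ E}`. -/
def sliceH (d : ℕ) (E : Set (Euc d)) (t : ℝ) : Set (Euc (d-1)) :=
  {y' | join d y' t ∈ E}

/-- Steiner symmetrization in the last coordinate. -/
noncomputable def steiner (d : ℕ) (E : Set (Euc d)) : Set (Euc d) :=
  {x | ∃ x' t, x = join d x' t ∧ 0 < volume (sliceV d E x') ∧
      ENNReal.ofReal (2 * |t|) ≤ volume (sliceV d E x')}

/-- Schwarz symmetrization in the first `d-1` coordinates. -/
noncomputable def schwarz (d : ℕ) (E : Set (Euc d)) : Set (Euc d) :=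
  {x | ∃ x' t, x = join d x' t ∧ 0 < volume (sliceH d E t) ∧
      ENNReal.ofReal
        ((volume (Metric.closedBall (0 : Euc (d-1)) 1)).toReal * ‖x'‖ ^ (d-1))
        ≤ volume (sliceH d E t)}

/-- `E^{†★} = (E^†)^★`. -/
noncomputable def dagStar (d : ℕ) (E : Set (Euc d)) : Set (Euc d) :=
  steiner d (schwarz d E)

/-- `E'_k = {x' : 2^k ≤ |E^{x'}| < 2^{k+1}}`. -/
noncomputable def layerBase (d : ℕ) (E : Set (Euc d)) (k : ℤ) : Set (Euc (d-1)) :=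
  {x' | ENNReal.ofReal ((2:ℝ) ^ k) ≤ volume (sliceV d E x') ∧
        volume (sliceV d E x') < ENNReal.ofReal ((2:ℝ) ^ (k+1))}

/-- `E_k = {x ∈ E : x' ∈ E'_k}`. -/
noncomputable def layer (d : ℕ) (E : Set (Euc d)) (k : ℤ) : Set (Euc d) :=
  {x ∈ E | projHead d x ∈ layerBase d E k}

/-- A special dilation `(x₁,…,x_d) ↦ (r x₁,…, r x_{d-1}, ρ x_d)`. -/
def spDil (d : ℕ) (r ρ : ℝ) (x : Euc d) : Euc d :=
  WithLp.toLp 2 (fun (i : Fin d) => if (i:ℕ) < d - 1 then r * x i else ρ * x i)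

/-- A vertical skew-shift `(x', x_d) ↦ (x', x_d + ℓ(x'))`. -/
noncomputable def skewShift (d : ℕ) (ℓ : Euc (d-1) →ᵃ[ℝ] ℝ) (x : Euc d) : Euc d :=
  join d (projHead d x) (lastC d x + ℓ (projHead d x))

/-- Assemble a point of `ℝ^d = ℝ^{d-k} × ℝ^k`. -/
def joinP (d k : ℕ) (y : Euc (d-k)) (z : Euc k) : Euc d :=
  WithLp.toLp 2 (fun (i : Fin d) => if h : (i:ℕ) < d - k then y ⟨i, h⟩
    else if h2 : (i:ℕ) - (d-k) < k then z ⟨(i:ℕ) - (d-k), h2⟩ else 0)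

/-- Slice `E^{y} = {z ∈ ℝ^k : (y,z) ∈ E}`. -/
def sliceK (d k : ℕ) (E : Set (Euc d)) (y : Euc (d-k)) : Set (Euc k) :=
  {z | joinP d k y z ∈ E}

/-- Projection `π(E) = {y : E^y ≠ ∅}`. -/
def projK (d k : ℕ) (E : Set (Euc d)) : Set (Euc (d-k)) :=
  {y | (sliceK d k E y).Nonempty}

/-- The closed ball centered at `0` of prescribed volume `γ` (a point if `γ = 0`). -/
noncomputable def ballOfVol (d : ℕ) (γ : ℝ) : Set (Euc d) :=
  Metric.closedBall 0
    ((γ / (volume (Metric.closedBall (0 : Euc d) 1)).toReal) ^ (1/(d:ℝ)))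

/-- `Λ_d(γ₁,γ₂,γ₃) = 𝒯(B₁,B₂,B₃)` for balls of volumes `γ_j` centered at `0`. -/
noncomputable def Lam (d : ℕ) (γ₁ γ₂ γ₃ : ℝ) : ℝ :=
  Ttri (ballOfVol d γ₁) (ballOfVol d γ₂) (ballOfVol d γ₃)

/-- `rℰ + v`. -/
def scaleShift (d : ℕ) (r : ℝ) (v : Euc d) (S : Set (Euc d)) : Set (Euc d) :=
  (fun x => r • x + v) '' S

end
/-- The set `S(y₃)` of Lemma 3.1. -/
def Sset (n : ℕ) (r₁ r₂ r₃ : ℝ) (y₃ : Euc n) : Set (Euc n × Euc n) :=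
  {p | ‖p.1‖ < r₁ ∧ ‖p.2‖ < r₂ ∧ p.1 + p.2 + y₃ = 0 ∧
    StrictAdm (Real.sqrt (r₁^2 - ‖p.1‖^2)) (Real.sqrt (r₂^2 - ‖p.2‖^2))
      (Real.sqrt (r₃^2 - ‖y₃‖^2))}

private lemma sqlt {x y : ℝ} (h : x^2 < y^2) (hy : 0 ≤ y) : x < y :=
  (le_abs_self x).trans_lt (abs_lt_of_sq_lt_sq h hy)

private lemma posfac {x y : ℝ} (h : 0 < x * y) (hy : 0 < y) : 0 < x :=
  (mul_pos_iff_of_pos_right hy).mp h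

private lemma triA (s₁ s₂ s₃ β : ℝ) (hA : s₂^2 = s₁^2+2*β*s₃+s₃^2) (h1 : -(β+s₃) < s₂)
    (h3 : 0 < s₃) (h20 : 0 ≤ s₂) : s₁ < s₂ + s₃ := by
  have h4 : s₁^2 < (s₂+s₃)^2 := by nlinarith [mul_pos h3 (show 0 < s₂+s₃+β by linarith)]
  exact sqlt h4 (by linarith)

private lemma triB (s₁ s₂ s₃ β : ℝ) (hA : s₂^2 = s₁^2+2*β*s₃+s₃^2) (h1 : β < s₁)
    (h3 : 0 < s₃) (h10 : 0 ≤ s₁) : s₂ < s₁ + s₃ := by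
  have h4 : s₂^2 < (s₁+s₃)^2 := by nlinarith [mul_pos h3 (show 0 < s₁ - β by linarith)]
  exact sqlt h4 (by linarith)

private lemma triC (s₁ s₂ s₃ β : ℝ) (hA : s₂^2 = s₁^2+2*β*s₃+s₃^2)
    (habs1 : |β| < s₁) (habs2 : |β+s₃| < s₂) (h3 : 0 < s₃) : s₃ < s₁ + s₂ := by
  have h10 : (0:ℝ) ≤ s₁ := (abs_nonneg β).trans habs1.le
  have h20 : (0:ℝ) ≤ s₂ := (abs_nonneg _).trans habs2.le
  have hprod : |β| * |β+s₃| < s₁ * s₂ :=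
    mul_lt_mul'' habs1 habs2 (abs_nonneg _) (abs_nonneg _)
  have habs3 : -(β*(β+s₃)) ≤ |β| * |β+s₃| := by
    rw [← abs_mul]; exact neg_le_abs _
  have hb1 : β^2 < s₁^2 := by nlinarith [sq_abs β, abs_nonneg β]
  have h4 : s₃^2 < (s₁+s₂)^2 := by nlinarith
  exact sqlt h4 (by linarith)

private lemma L1 (r₁ r₂ r₃ : ℝ) (h12 : r₁ < r₂+r₃) (h13 : r₂ < r₁+r₃) (h23 : r₃ < r₁+r₂)
    (h1 : 0 < r₁) (h2 : 0 < r₂) (h3 : 0 < r₃) :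
    ((r₂^2-r₁^2-r₃^2)/2)^2 < r₁^2*r₃^2 := by
  nlinarith [mul_pos (mul_pos (show (0:ℝ) < r₂ - r₁ + r₃ by linarith)
      (show (0:ℝ) < r₂ + r₁ - r₃ by linarith))
    (mul_pos (show (0:ℝ) < r₁ + r₃ - r₂ by linarith)
      (show (0:ℝ) < r₁ + r₃ + r₂ by linarith))]

private lemma L2 (r₁ r₂ r₃ : ℝ) (h12 : r₁ < r₂+r₃) (h13 : r₂ < r₁+r₃) (h23 : r₃ < r₁+r₂)
    (h1 : 0 < r₁) (h2 : 0 < r₂) (h3 : 0 < r₃) :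
    ((r₂^2-r₁^2-r₃^2)/2 + r₃^2)^2 < r₂^2*r₃^2 := by
  nlinarith [mul_pos (mul_pos (show (0:ℝ) < r₁ - r₂ + r₃ by linarith)
      (show (0:ℝ) < r₁ + r₂ - r₃ by linarith))
    (mul_pos (show (0:ℝ) < r₂ + r₃ - r₁ by linarith)
      (show (0:ℝ) < r₂ + r₃ + r₁ by linarith))]

lemma core (r₁ r₂ r₃ a m₁ m₂ c : ℝ) (h : StrictAdm r₁ r₂ r₃) (ha : 0 ≤ a) (halt : a < r₃)
    (hm₁ : 0 ≤ m₁) (hm₂ : 0 ≤ m₂)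
    (hc : c = (r₂^2 - r₁^2 - r₃^2)/2)
    (e₁ : m₁^2 * r₃^4 = c^2 * a^2)
    (e₂ : m₂^2 * r₃^4 = (c + r₃^2)^2 * a^2) :
    m₁ < r₁ ∧ m₂ < r₂ ∧
    StrictAdm (Real.sqrt (r₁^2 - m₁^2)) (Real.sqrt (r₂^2 - m₂^2)) (Real.sqrt (r₃^2 - a^2)) := by
  obtain ⟨hr1, hr2, hr3, h12, h13, h23⟩ := h
  have hr3sq : (0:ℝ) < r₃^2 := by positivity
  have hr34 : (0:ℝ) < r₃^4 := by positivity
  have hc2 : c^2 < r₁^2 * r₃^2 := by rw [hc]; exact L1 r₁ r₂ r₃ h12 h13 h23 hr1 hr2 hr3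
  have hc2' : (c + r₃^2)^2 < r₂^2 * r₃^2 := by
    rw [hc]; exact L2 r₁ r₂ r₃ h12 h13 h23 hr1 hr2 hr3
  have ha2 : a^2 ≤ r₃^2 := pow_le_pow_left₀ ha halt.le 2
  have haa : a^2 < r₃^2 := sq_lt_sq' (by linarith) halt
  have hck : 0 < (r₁^2*r₃^2 - c^2) * r₃^2 := mul_pos (by linarith) hr3sq
  have hck' : 0 < (r₂^2*r₃^2 - (c+r₃^2)^2) * r₃^2 := mul_pos (by linarith) hr3sq
  have hca : c^2*a^2 ≤ c^2*r₃^2 := mul_le_mul_of_nonneg_left ha2 (sq_nonneg c)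
  have hca' : (c+r₃^2)^2*a^2 ≤ (c+r₃^2)^2*r₃^2 :=
    mul_le_mul_of_nonneg_left ha2 (sq_nonneg _)
  have hm1sq : m₁^2 < r₁^2 := by
    have k : 0 < (r₁^2 - m₁^2) * r₃^4 := by linarith [e₁, hca, hck]
    linarith [posfac k hr34]
  have hm1lt : m₁ < r₁ := sqlt hm1sq hr1.le
  have hm2sq : m₂^2 < r₂^2 := by
    have k : 0 < (r₂^2 - m₂^2) * r₃^4 := by linarith [e₂, hca', hck']
    linarith [posfac k hr34]
  have hm2lt : m₂ < r₂ := sqlt hm2sq hr2.le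
  set s₁ := Real.sqrt (r₁^2 - m₁^2) with hs₁def
  set s₂ := Real.sqrt (r₂^2 - m₂^2) with hs₂def
  set s₃ := Real.sqrt (r₃^2 - a^2) with hs₃def
  have hs₁0 : 0 ≤ s₁ := Real.sqrt_nonneg _
  have hs₂0 : 0 ≤ s₂ := Real.sqrt_nonneg _
  have hs₃pos : 0 < s₃ := Real.sqrt_pos.2 (by linarith)
  have hs₁sq : s₁^2 = r₁^2 - m₁^2 := Real.sq_sqrt (by linarith)
  have hs₂sq : s₂^2 = r₂^2 - m₂^2 := Real.sq_sqrt (by linarith)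
  have hs₃sq : s₃^2 = r₃^2 - a^2 := Real.sq_sqrt (by linarith)
  set β := c * s₃ / r₃^2 with hβdef
  have hβ : β * r₃^2 = c * s₃ := by
    rw [hβdef]; field_simp
  have hβ2 : β^2 * r₃^4 = c^2 * s₃^2 := by linear_combination (β*r₃^2 + c*s₃) * hβ
  have hA1 : s₁^2 * r₃^4 = r₁^2*r₃^4 - c^2*a^2 := by linear_combination r₃^4 * hs₁sq - e₁
  have hA2 : s₂^2 * r₃^4 = r₂^2*r₃^4 - (c+r₃^2)^2*a^2 := by linear_combination r₃^4 * hs₂sq - e₂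
  have hB1 : β^2 * r₃^4 = c^2*r₃^2 - c^2*a^2 := by linear_combination hβ2 + c^2*hs₃sq
  have hβ3 : (β+s₃) * r₃^2 = (c+r₃^2)*s₃ := by linear_combination hβ
  have hβ4 : (β+s₃)^2 * r₃^4 = (c+r₃^2)^2*s₃^2 := by
    linear_combination ((β+s₃)*r₃^2 + (c+r₃^2)*s₃) * hβ3
  have hB2 : (β+s₃)^2 * r₃^4 = (c+r₃^2)^2*r₃^2 - (c+r₃^2)^2*a^2 := by
    linear_combination hβ4 + (c+r₃^2)^2*hs₃sq
  have hb1 : β^2 < s₁^2 := by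
    have k : 0 < (s₁^2 - β^2) * r₃^4 := by linarith [hck, hA1, hB1]
    linarith [posfac k hr34]
  have hb2 : (β+s₃)^2 < s₂^2 := by
    have k : 0 < (s₂^2 - (β+s₃)^2) * r₃^4 := by linarith [hck', hA2, hB2]
    linarith [posfac k hr34]
  have habs1 : |β| < s₁ := abs_lt_of_sq_lt_sq hb1 hs₁0
  have habs2 : |β+s₃| < s₂ := abs_lt_of_sq_lt_sq hb2 hs₂0
  have hs₁pos : 0 < s₁ := lt_of_le_of_lt (abs_nonneg _) habs1
  have hs₂pos : 0 < s₂ := lt_of_le_of_lt (abs_nonneg _) habs2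
  have hAmul : s₂^2 * r₃^4 = (s₁^2 + 2*β*s₃ + s₃^2) * r₃^4 := by
    linear_combination hA2 - hA1 - 2*s₃*r₃^2*hβ - r₃^4*hs₃sq - 2*c*r₃^2*hs₃sq - 2*r₃^4*hc
  have hA : s₂^2 = s₁^2 + 2*β*s₃ + s₃^2 :=
    mul_right_cancel₀ (by positivity) hAmul
  exact ⟨hm1lt, hm2lt, hs₁pos, hs₂pos, hs₃pos,
    triA s₁ s₂ s₃ β hA (neg_lt.mp (neg_lt_of_abs_lt habs2)) hs₃pos hs₂0,
    triB s₁ s₂ s₃ β hA (lt_of_abs_lt habs1) hs₃pos hs₁0,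
    triC s₁ s₂ s₃ β hA habs1 habs2 hs₃pos⟩

lemma mem_Sset (n : ℕ) (r₁ r₂ r₃ : ℝ) (h : StrictAdm r₁ r₂ r₃) (y₃ : Euc n)
    (hy : ‖y₃‖ < r₃) :
    ((((r₂^2 - r₁^2 - r₃^2)/2) / r₃^2) • y₃,
      -((((r₂^2 - r₁^2 - r₃^2)/2) / r₃^2) • y₃) - y₃) ∈ Sset n r₁ r₂ r₃ y₃ := by
  have hr3 : 0 < r₃ := h.2.2.1
  have hr3sq : (r₃:ℝ)^2 ≠ 0 := by positivity
  set c : ℝ := (r₂^2 - r₁^2 - r₃^2)/2 with hc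
  set y₁ : Euc n := ((c / r₃^2) • y₃) with hy₁
  have hy₂ : -y₁ - y₃ = (-((c + r₃^2) / r₃^2)) • y₃ := by
    rw [hy₁]
    have : (-((c + r₃^2) / r₃^2)) = -(c/r₃^2) - 1 := by field_simp; ring
    rw [this, sub_smul, neg_smul, one_smul]
  have hn1 : ‖y₁‖ = |c / r₃^2| * ‖y₃‖ := by
    rw [hy₁, norm_smul, Real.norm_eq_abs]
  have hn2 : ‖-y₁ - y₃‖ = |(c + r₃^2) / r₃^2| * ‖y₃‖ := by
    rw [hy₂, norm_smul, Real.norm_eq_abs, abs_neg]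
  have esq : ∀ b t a : ℝ, t ≠ 0 → (|b / t^2| * a)^2 * t^4 = b^2 * a^2 := by
    intro b t a ht
    rw [mul_pow, sq_abs, div_pow]
    field_simp
  have e₁ : ‖y₁‖^2 * r₃^4 = c^2 * ‖y₃‖^2 := by
    rw [hn1]; exact esq c r₃ ‖y₃‖ (ne_of_gt hr3)
  have e₂ : ‖-y₁ - y₃‖^2 * r₃^4 = (c + r₃^2)^2 * ‖y₃‖^2 := by
    rw [hn2]; exact esq (c + r₃^2) r₃ ‖y₃‖ (ne_of_gt hr3)
  obtain ⟨h1, h2, h3⟩ := core r₁ r₂ r₃ ‖y₃‖ ‖y₁‖ ‖-y₁ - y₃‖ c h (norm_nonneg _) hy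
    (norm_nonneg _) (norm_nonneg _) hc e₁ e₂
  exact ⟨h1, h2, by simp [sub_eq_add_neg], h3⟩

lemma isOpen_W (n : ℕ) : IsOpen {q : (Euc n × ℝ × ℝ × ℝ) × Euc n |
    (q.2, -q.2 - q.1.1) ∈ Sset n q.1.2.1 q.1.2.2.1 q.1.2.2.2 q.1.1} := by
  have heq : {q : (Euc n × ℝ × ℝ × ℝ) × Euc n |
      (q.2, -q.2 - q.1.1) ∈ Sset n q.1.2.1 q.1.2.2.1 q.1.2.2.2 q.1.1} =
      {q : (Euc n × ℝ × ℝ × ℝ) × Euc n |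
        ‖q.2‖ < q.1.2.1 ∧ ‖-q.2 - q.1.1‖ < q.1.2.2.1 ∧
        (0 < Real.sqrt (q.1.2.1^2 - ‖q.2‖^2) ∧
         0 < Real.sqrt (q.1.2.2.1^2 - ‖-q.2 - q.1.1‖^2) ∧
         0 < Real.sqrt (q.1.2.2.2^2 - ‖q.1.1‖^2) ∧
         Real.sqrt (q.1.2.1^2 - ‖q.2‖^2) <
           Real.sqrt (q.1.2.2.1^2 - ‖-q.2 - q.1.1‖^2) +
           Real.sqrt (q.1.2.2.2^2 - ‖q.1.1‖^2) ∧
         Real.sqrt (q.1.2.2.1^2 - ‖-q.2 - q.1.1‖^2) <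
           Real.sqrt (q.1.2.1^2 - ‖q.2‖^2) + Real.sqrt (q.1.2.2.2^2 - ‖q.1.1‖^2) ∧
         Real.sqrt (q.1.2.2.2^2 - ‖q.1.1‖^2) <
           Real.sqrt (q.1.2.1^2 - ‖q.2‖^2) +
           Real.sqrt (q.1.2.2.1^2 - ‖-q.2 - q.1.1‖^2))} := by
    ext q
    simp only [Sset, StrictAdm, Set.mem_setOf_eq]
    have : q.2 + (-q.2 - q.1.1) + q.1.1 = 0 := by abel
    tauto
  rw [heq]
  have c1 : Continuous fun q : (Euc n × ℝ × ℝ × ℝ) × Euc n => ‖q.2‖ := by fun_prop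
  have c2 : Continuous fun q : (Euc n × ℝ × ℝ × ℝ) × Euc n => ‖-q.2 - q.1.1‖ := by fun_prop
  have c3 : Continuous fun q : (Euc n × ℝ × ℝ × ℝ) × Euc n => ‖q.1.1‖ := by fun_prop
  have p1 : Continuous fun q : (Euc n × ℝ × ℝ × ℝ) × Euc n => q.1.2.1 := by fun_prop
  have p2 : Continuous fun q : (Euc n × ℝ × ℝ × ℝ) × Euc n => q.1.2.2.1 := by fun_prop
  have p3 : Continuous fun q : (Euc n × ℝ × ℝ × ℝ) × Euc n => q.1.2.2.2 := by fun_prop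
  have s1 : Continuous fun q : (Euc n × ℝ × ℝ × ℝ) × Euc n =>
      Real.sqrt (q.1.2.1^2 - ‖q.2‖^2) :=
    Real.continuous_sqrt.comp ((p1.pow 2).sub (c1.pow 2))
  have s2 : Continuous fun q : (Euc n × ℝ × ℝ × ℝ) × Euc n =>
      Real.sqrt (q.1.2.2.1^2 - ‖-q.2 - q.1.1‖^2) :=
    Real.continuous_sqrt.comp ((p2.pow 2).sub (c2.pow 2))
  have s3 : Continuous fun q : (Euc n × ℝ × ℝ × ℝ) × Euc n =>
      Real.sqrt (q.1.2.2.2^2 - ‖q.1.1‖^2) :=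
    Real.continuous_sqrt.comp ((p3.pow 2).sub (c3.pow 2))
  exact (isOpen_lt c1 p1).inter <| (isOpen_lt c2 p2).inter <|
    (isOpen_lt continuous_const s1).inter <| (isOpen_lt continuous_const s2).inter <|
    (isOpen_lt continuous_const s3).inter <| (isOpen_lt s1 (s2.add s3)).inter <|
    (isOpen_lt s2 (s1.add s3)).inter (isOpen_lt s3 (s1.add s2))

set_option maxHeartbeats 1000000 in
theorem apb_main (n : ℕ)
    (r₁ r₂ r₃ : ℝ) (hadm : StrictAdm r₁ r₂ r₃)
    (y₃ : Euc n) (hy : ‖y₃‖ < r₃) :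
    (Sset n r₁ r₂ r₃ y₃).Nonempty ∧
    0 < volume {y₁ : Euc n | (y₁, -y₁ - y₃) ∈ Sset n r₁ r₂ r₃ y₃} ∧
    LowerSemicontinuousAt
      (fun p : Euc n × ℝ × ℝ × ℝ =>
        volume {y₁ : Euc n | (y₁, -y₁ - p.1) ∈ Sset n p.2.1 p.2.2.1 p.2.2.2 p.1})
      (y₃, r₁, r₂, r₃) := by
  have hW := isOpen_W n
  set W : Set ((Euc n × ℝ × ℝ × ℝ) × Euc n) :=
    {q | (q.2, -q.2 - q.1.1) ∈ Sset n q.1.2.1 q.1.2.2.1 q.1.2.2.2 q.1.1} with hWdef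
  have hUopen : ∀ p : Euc n × ℝ × ℝ × ℝ,
      IsOpen {y₁ : Euc n | (y₁, -y₁ - p.1) ∈ Sset n p.2.1 p.2.2.1 p.2.2.2 p.1} := by
    intro p
    have : {y₁ : Euc n | (y₁, -y₁ - p.1) ∈ Sset n p.2.1 p.2.2.1 p.2.2.2 p.1} =
        (fun y : Euc n => ((p, y) : (Euc n × ℝ × ℝ × ℝ) × Euc n)) ⁻¹' W := rfl
    rw [this]
    exact hW.preimage (by fun_prop)
  have hmem := mem_Sset n r₁ r₂ r₃ hadm y₃ hy
  refine ⟨⟨_, hmem⟩, ?_, ?_⟩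
  · exact (hUopen (y₃, r₁, r₂, r₃)).measure_pos volume ⟨_, hmem⟩
  · intro b hb
    obtain ⟨K, hKU, hK, hbK⟩ := (hUopen (y₃, r₁, r₂, r₃)).exists_lt_isCompact hb
    have hsub : {((y₃, r₁, r₂, r₃) : Euc n × ℝ × ℝ × ℝ)} ×ˢ K ⊆ W := by
      rintro ⟨p, y⟩ ⟨hp, hyK⟩
      simp only [Set.mem_singleton_iff] at hp
      subst hp
      exact hKU hyK
    obtain ⟨u, v, hu, hv, hp₀u, hKv, huv⟩ :=
      generalized_tube_lemma isCompact_singleton hK hW hsub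
    filter_upwards [hu.mem_nhds (hp₀u rfl)] with p hp
    refine hbK.trans_le (measure_mono fun y hyK => ?_)
    have : (p, y) ∈ W := huv ⟨hp, hKv hyK⟩
    exact this


/-- Lemma 3.1. -/
theorem allplayball (d k : ℕ) (hd : 2 ≤ d) (hk : 1 ≤ k) (hk' : k ≤ d - 1)
    (r₁ r₂ r₃ : ℝ) (hadm : StrictAdm r₁ r₂ r₃)
    (y₃ : Euc (d-k)) (hy : ‖y₃‖ < r₃) :
    (Sset (d-k) r₁ r₂ r₃ y₃).Nonempty ∧
    0 < volume {y₁ : Euc (d-k) | (y₁, -y₁ - y₃) ∈ Sset (d-k) r₁ r₂ r₃ y₃} ∧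
    LowerSemicontinuousAt
      (fun p : Euc (d-k) × ℝ × ℝ × ℝ =>
        volume {y₁ : Euc (d-k) | (y₁, -y₁ - p.1) ∈ Sset (d-k) p.2.1 p.2.2.1 p.2.2.2 p.1})
      (y₃, r₁, r₂, r₃) :=
  apb_main (d-k) r₁ r₂ r₃ hadm y₃ hy
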